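/- Let G = (V,E,w) be a weighted graph, h a hop parameter, β ≥ 1, ε ∈ (0,1), and suppose d̃(u,v) is an estimate satisfying d_G^{(β·h)}(u,v) ≤ d̃(u,v) ≤ β·d_G^{(h)}(u,v). For a scale i with 2^i ≤ d̃(u,v) < 2^{i+1}, define the graph G_i = (V,E,w_i) with w_i(e) = w(e) + ω_i where ω_i = (ε/(β·h))·2^i. Then: (a) d_{G_i}(u,v) ≤ (1+ε)·d_G^{(h)}(u,v); (b) d_{G_i}(u,v) ≥ d_G^{(⌈2β·h/ε⌉)}(u,v); (c) every path P in G_i from u to v of weight w_i(P) ≤ c·2^i (for any c ≥ 1) has at most c·β·h/ε hops. -/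

import Mathlib

open scoped ENNReal

/-- `hopDist w h u v` is the hop-constrained distance: the minimum weight of a
`u`-`v` path (walk) with at most `h` edges, where `w a b = ⊤` encodes a non-edge. -/
noncomputable def hopDist {V : Type*} [DecidableEq V] (w : V → V → ℝ≥0∞) :
    ℕ → V → V → ℝ≥0∞
  | 0 => fun u v => if u = v then 0 else ⊤
  | (h + 1) => fun u v => min (hopDist w h u v) (⨅ z, w u z + hopDist w h z v)

section Aux
variable {V : Type*} [DecidableEq V]

lemma hopDist_zero (w : V → V → ℝ≥0∞) (u v : V) :
    hopDist w 0 u v = if u = v then 0 else ⊤ := rfl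

lemma hopDist_succ (w : V → V → ℝ≥0∞) (n : ℕ) (u v : V) :
    hopDist w (n + 1) u v
      = min (hopDist w n u v) (⨅ z, w u z + hopDist w n z v) := rfl

lemma hopDist_anti (w : V → V → ℝ≥0∞) {m n : ℕ} (hmn : m ≤ n) (u v : V) :
    hopDist w n u v ≤ hopDist w m u v := by
  induction n, hmn using Nat.le_induction with
  | base => exact le_rfl
  | succ n hmn ih =>
    rw [hopDist_succ]
    exact (min_le_left _ _).trans ih

lemma hopDist_self (w : V → V → ℝ≥0∞) (n : ℕ) (u : V) :
    hopDist w n u u = 0 :=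
  le_antisymm ((hopDist_anti w (Nat.zero_le n) u u).trans_eq (by simp [hopDist_zero]))
    (zero_le)

noncomputable def walkW (w : V → V → ℝ≥0∞) (v : V) : V → List V → ℝ≥0∞
  | u, [] => if u = v then 0 else ⊤
  | u, z :: l => w u z + walkW w v z l

lemma walkW_append (w : V → V → ℝ≥0∞) (v x : V) (l₂ : List V) :
    ∀ (l₁ : List V) (u : V),
      walkW w v u (l₁ ++ x :: l₂) = walkW w x u (l₁ ++ [x]) + walkW w v x l₂ := by
  intro l₁
  induction l₁ with
  | nil => intro u; simp [walkW, add_assoc]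
  | cons a t ih => intro u; simp only [List.cons_append, walkW, add_assoc]; exact congrArg _ (ih a)

lemma walkW_shortcut (w : V → V → ℝ≥0∞) (v x : V) (l₁ l₂ l₃ : List V) (u : V) :
    walkW w v u (l₁ ++ x :: l₃) ≤ walkW w v u (l₁ ++ x :: (l₂ ++ x :: l₃)) := by
  rw [walkW_append w v x l₃ l₁ u, walkW_append w v x (l₂ ++ x :: l₃) l₁ u,
    walkW_append w v x l₃ l₂ x]
  exact add_le_add_right le_add_self _

lemma exists_dup {L : List V} (hL : ¬ L.Nodup) :
    ∃ (x : V) (l₁ l₂ l₃ : List V), L = l₁ ++ x :: (l₂ ++ x :: l₃) := by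
  induction L with
  | nil => simp at hL
  | cons a t ih =>
    by_cases ha : a ∈ t
    · obtain ⟨s, r, rfl⟩ := List.append_of_mem ha
      exact ⟨a, [], s, r, rfl⟩
    · have ht : ¬ t.Nodup := by
        intro hnd; exact hL (List.nodup_cons.mpr ⟨ha, hnd⟩)
      obtain ⟨x, l₁, l₂, l₃, rfl⟩ := ih ht
      exact ⟨x, a :: l₁, l₂, l₃, rfl⟩

lemma walkW_reduce [Fintype V] (w : V → V → ℝ≥0∞) (v : V) :
    ∀ (n : ℕ) (l : List V), l.length ≤ n → ∀ u : V,
      ∃ l' : List V, l'.length + 1 ≤ Fintype.card V ∧ walkW w v u l' ≤ walkW w v u l := by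
  intro n
  induction n with
  | zero =>
    intro l hl u
    have : l = [] := List.length_eq_zero_iff.mp (Nat.le_zero.mp hl)
    subst this
    refine ⟨[], ?_, le_rfl⟩
    have : Nonempty V := ⟨u⟩
    exact Fintype.card_pos
  | succ n ih =>
    intro l hl u
    by_cases hnd : (u :: l).Nodup
    · exact ⟨l, by simpa using hnd.length_le_card, le_rfl⟩
    · obtain ⟨x, l₁, l₂, l₃, hdec⟩ := exists_dup hnd
      cases l₁ with
      | nil =>
        simp only [List.nil_append, List.cons.injEq] at hdec
        obtain ⟨rfl, rfl⟩ := hdec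
        have hlen : l₃.length ≤ n := by
          simp only [List.length_append, List.length_cons] at hl; omega
        obtain ⟨l', h1, h2⟩ := ih l₃ hlen u
        refine ⟨l', h1, h2.trans ?_⟩
        rw [walkW_append w v u l₃ l₂ u]
        exact le_add_self
      | cons a t =>
        simp only [List.cons_append, List.cons.injEq] at hdec
        obtain ⟨rfl, rfl⟩ := hdec
        have hlen : (t ++ x :: l₃).length ≤ n := by
          simp only [List.length_append, List.length_cons] at hl ⊢; omega
        obtain ⟨l', h1, h2⟩ := ih (t ++ x :: l₃) hlen u
        exact ⟨l', h1, h2.trans (walkW_shortcut w v x t l₂ l₃ u)⟩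

lemma hopDist_le_walkW (w : V → V → ℝ≥0∞) (v : V) :
    ∀ (l : List V) (n : ℕ) (u : V), l.length ≤ n → hopDist w n u v ≤ walkW w v u l := by
  intro l
  induction l with
  | nil =>
    intro n u _
    rcases eq_or_ne u v with rfl | hne
    · simp [walkW, hopDist_self]
    · simp [walkW, hne]
  | cons z t ih =>
    intro n u hl
    cases n with
    | zero => simp at hl
    | succ n =>
      rw [hopDist_succ]
      refine (min_le_right _ _).trans ((iInf_le _ z).trans ?_)
      exact add_le_add_right (ih n z (by simpa using hl)) _

lemma exists_walkW_le [Fintype V] (w : V → V → ℝ≥0∞) (v : V) :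
    ∀ (n : ℕ) (u : V), ∃ l : List V, l.length ≤ n ∧ walkW w v u l ≤ hopDist w n u v := by
  intro n
  induction n with
  | zero => intro u; exact ⟨[], le_rfl, le_of_eq rfl⟩
  | succ n ih =>
    intro u
    have : Nonempty V := ⟨u⟩
    obtain ⟨z₀, hz₀⟩ := Finite.exists_min (fun z => w u z + hopDist w n z v)
    rcases le_total (hopDist w n u v) (w u z₀ + hopDist w n z₀ v) with hc | hc
    · obtain ⟨l, h1, h2⟩ := ih u
      refine ⟨l, h1.trans (Nat.le_succ n), ?_⟩
      rw [hopDist_succ, min_eq_left (le_iInf fun z => hc.trans (hz₀ z))]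
      exact h2
    · obtain ⟨l, h1, h2⟩ := ih z₀
      refine ⟨z₀ :: l, by simpa using h1, ?_⟩
      have hB : (⨅ z, w u z + hopDist w n z v) = w u z₀ + hopDist w n z₀ v :=
        le_antisymm (iInf_le _ z₀) (le_iInf hz₀)
      rw [hopDist_succ, min_eq_right (by rw [hB]; exact hc)]
      rw [hB]
      exact add_le_add_right h2 _

lemma hopDist_card_le [Fintype V] (w : V → V → ℝ≥0∞) (n : ℕ) (u v : V) :
    hopDist w (Fintype.card V) u v ≤ hopDist w n u v := by
  obtain ⟨l, _, h2⟩ := exists_walkW_le w v n u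
  obtain ⟨l', h1', h2'⟩ := walkW_reduce w v l.length l le_rfl u
  exact (hopDist_le_walkW w v l' _ u (by omega)).trans (h2'.trans h2)

lemma hopDist_add_weight [Fintype V] (w : V → V → ℝ≥0∞) (ω : ℝ≥0∞) :
    ∀ (n : ℕ) (u v : V),
      hopDist (fun a b => w a b + ω) n u v ≤ hopDist w n u v + n * ω := by
  intro n
  induction n with
  | zero => intro u v; simp [hopDist_zero]
  | succ n ih =>
    intro u v
    rw [hopDist_succ, hopDist_succ, ← min_add_add_right]
    refine min_le_min ?_ ?_
    · exact (ih u v).trans (add_le_add le_rfl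
        (mul_le_mul_left (Nat.cast_le.mpr (Nat.le_succ n)) ω))
    · rw [ENNReal.iInf_add]
      refine le_iInf fun z => (iInf_le _ z).trans ?_
      calc w u z + ω + hopDist (fun a b => w a b + ω) n z v
          ≤ w u z + ω + (hopDist w n z v + n * ω) := by gcongr; exact ih z v
        _ = w u z + hopDist w n z v + ((n : ℝ≥0∞) + 1) * ω := by ring
        _ = w u z + hopDist w n z v + ((n + 1 : ℕ) : ℝ≥0∞) * ω := by push_cast; ring

lemma hopDist_lower (w : V → V → ℝ≥0∞) (ω : ℝ≥0∞) :
    ∀ (n k : ℕ) (u v : V),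
      min (hopDist w k u v) (((k + 1 : ℕ) : ℝ≥0∞) * ω)
        ≤ hopDist (fun a b => w a b + ω) n u v := by
  intro n
  induction n with
  | zero =>
    intro k u v
    rw [hopDist_zero]
    split
    · rename_i huv
      subst huv
      exact (min_le_left _ _).trans_eq (hopDist_self w k u)
    · exact le_top
  | succ n ih =>
    intro k u v
    rw [hopDist_succ]
    refine le_min ((min_le_min le_rfl le_rfl).trans (ih k u v)) (le_iInf fun z => ?_)
    cases k with
    | zero =>
      refine (min_le_right _ _).trans ?_
      calc ((0 + 1 : ℕ) : ℝ≥0∞) * ω = ω := by norm_num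
        _ ≤ w u z + ω := le_add_self
        _ ≤ w u z + ω + hopDist (fun a b => w a b + ω) n z v := le_self_add
    | succ k' =>
      have h1 : hopDist w (k' + 1) u v ≤ w u z + hopDist w k' z v := by
        rw [hopDist_succ]
        exact (min_le_right _ _).trans (iInf_le _ z)
      have h2 : ((k' + 1 + 1 : ℕ) : ℝ≥0∞) * ω
          ≤ (w u z + ω) + ((k' + 1 : ℕ) : ℝ≥0∞) * ω := by
        push_cast
        calc ((k' : ℝ≥0∞) + 1 + 1) * ω = ω + ((k' : ℝ≥0∞) + 1) * ω := by ring
          _ ≤ (w u z + ω) + ((k' : ℝ≥0∞) + 1) * ω := by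
              gcongr; exact le_add_self
      calc min (hopDist w (k' + 1) u v) (((k' + 1 + 1 : ℕ) : ℝ≥0∞) * ω)
          ≤ min (w u z + hopDist w k' z v) ((w u z + ω) + ((k' + 1 : ℕ) : ℝ≥0∞) * ω) :=
            min_le_min h1 h2
        _ ≤ min ((w u z + ω) + hopDist w k' z v) ((w u z + ω) + ((k' + 1 : ℕ) : ℝ≥0∞) * ω) := by
            refine min_le_min ?_ le_rfl
            gcongr
            exact le_self_add
        _ = (w u z + ω) + min (hopDist w k' z v) (((k' + 1 : ℕ) : ℝ≥0∞) * ω) :=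
            min_add_add_left _ _ _
        _ ≤ (w u z + ω) + hopDist (fun a b => w a b + ω) n z v :=
            add_le_add_right (ih k' z v) _

end Aux

/-- Given an estimate dEst with d_G^{(βh)}(u,v) ≤ dEst ≤ β·d_G^{(h)}(u,v)
and 2^i ≤ dEst < 2^{i+1}, set ω = (ε/(βh))·2^i and w_i = w + ω (the graph G_i). Then:
(a) d_{G_i}(u,v) ≤ (1+ε)·d_G^{(h)}(u,v);
(b) d_{G_i}(u,v) ≥ d_G^{(m)}(u,v) for every hop budget m ≥ 2βh/ε;
(c) any u-v path in G_i with s hops and w_i-weight W ≤ c·2^i (so that s·ω ≤ W)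
    has s ≤ c·β·h/ε hops. -/
theorem stmt15 {V : Type*} [Fintype V] [DecidableEq V]
    (w : V → V → ℝ≥0∞) (h β : ℕ) (hh : 1 ≤ h) (hβ : 1 ≤ β)
    (ε : ℝ≥0∞) (hε0 : 0 < ε) (hε1 : ε < 1)
    (u v : V) (dEst : ℝ≥0∞)
    (hlo : hopDist w (β * h) u v ≤ dEst)
    (hhi : dEst ≤ (β : ℝ≥0∞) * hopDist w h u v)
    (i : ℕ) (hsc1 : (2 : ℝ≥0∞) ^ i ≤ dEst) (hsc2 : dEst < 2 ^ (i + 1))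
    (ω : ℝ≥0∞) (hω : ω = ε / ((β : ℝ≥0∞) * h) * 2 ^ i)
    (wi : V → V → ℝ≥0∞) (hwi : ∀ a b, wi a b = w a b + ω) :
    hopDist wi (Fintype.card V) u v ≤ (1 + ε) * hopDist w h u v ∧
    (∀ m : ℕ, 2 * (β : ℝ≥0∞) * h / ε ≤ m →
        hopDist w m u v ≤ hopDist wi (Fintype.card V) u v) ∧
    (∀ (c W : ℝ≥0∞) (s : ℕ), (s : ℝ≥0∞) * ω ≤ W → W ≤ c * 2 ^ i →
        (s : ℝ≥0∞) ≤ c * (β : ℝ≥0∞) * h / ε) := by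

  have hwieq : wi = fun a b => w a b + ω := funext fun a => funext fun b => hwi a b
  have hε0' : ε ≠ 0 := hε0.ne'
  have hεt : ε ≠ ⊤ := (hε1.trans ENNReal.one_lt_top).ne
  have hB0 : ((β : ℝ≥0∞) * h) ≠ 0 :=
    mul_ne_zero (Nat.cast_ne_zero.mpr (by omega)) (Nat.cast_ne_zero.mpr (by omega))
  have hBt : ((β : ℝ≥0∞) * h) ≠ ⊤ :=
    ENNReal.mul_ne_top (ENNReal.natCast_ne_top β) (ENNReal.natCast_ne_top h)
  set q : ℝ≥0∞ := ε / ((β : ℝ≥0∞) * h) with hq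
  have hcancel : ((β : ℝ≥0∞) * h) * q = ε := ENNReal.mul_div_cancel hB0 hBt
  refine ⟨?_, ?_, ?_⟩
  · -- (a)
    have hhw : (h : ℝ≥0∞) * ω ≤ ε * hopDist w h u v := by
      calc (h : ℝ≥0∞) * ω = (h : ℝ≥0∞) * q * 2 ^ i := by rw [hω, ← mul_assoc]
        _ ≤ (h : ℝ≥0∞) * q * dEst := mul_le_mul_right hsc1 _
        _ ≤ (h : ℝ≥0∞) * q * ((β : ℝ≥0∞) * hopDist w h u v) := mul_le_mul_right hhi _
        _ = ((β : ℝ≥0∞) * h * q) * hopDist w h u v := by ring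
        _ = ε * hopDist w h u v := by rw [hcancel]
    calc hopDist wi (Fintype.card V) u v ≤ hopDist wi h u v := hopDist_card_le wi h u v
      _ ≤ hopDist w h u v + (h : ℝ≥0∞) * ω := by
          rw [hwieq]; exact hopDist_add_weight w ω h u v
      _ ≤ hopDist w h u v + ε * hopDist w h u v := add_le_add_right hhw _
      _ = (1 + ε) * hopDist w h u v := by ring
  · -- (b)
    intro m hm
    have h2B : (2 : ℝ≥0∞) * β * h ≤ 2 * β * h / ε := by
      rw [ENNReal.le_div_iff_mul_le (Or.inl hε0') (Or.inl hεt)]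
      calc 2 * (β : ℝ≥0∞) * h * ε ≤ 2 * (β : ℝ≥0∞) * h * 1 := mul_le_mul_right hε1.le _
        _ = 2 * (β : ℝ≥0∞) * h := mul_one _
    have hml : β * h ≤ m := by
      have : ((β * h : ℕ) : ℝ≥0∞) ≤ (m : ℕ) := by
        push_cast
        calc (β : ℝ≥0∞) * h = 1 * ((β : ℝ≥0∞) * h) := (one_mul _).symm
          _ ≤ 2 * ((β : ℝ≥0∞) * h) := mul_le_mul_left one_le_two _
          _ = 2 * (β : ℝ≥0∞) * h := (mul_assoc _ _ _).symm
          _ ≤ 2 * (β : ℝ≥0∞) * h / ε := h2B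
          _ ≤ (m : ℝ≥0∞) := hm
      exact_mod_cast this
    have hone : ((β : ℝ≥0∞) * h) / ε * (ε / ((β : ℝ≥0∞) * h)) = 1 := by
      rw [div_eq_mul_inv, div_eq_mul_inv]
      calc ((β : ℝ≥0∞) * h) * ε⁻¹ * (ε * ((β : ℝ≥0∞) * h)⁻¹)
          = (((β : ℝ≥0∞) * h) * ((β : ℝ≥0∞) * h)⁻¹) * (ε * ε⁻¹) := by ring
        _ = 1 := by
            rw [ENNReal.mul_inv_cancel hB0 hBt, ENNReal.mul_inv_cancel hε0' hεt, one_mul]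
    have h2q : (2 * (β : ℝ≥0∞) * h / ε) * q = 2 := by
      rw [hq, mul_assoc (2 : ℝ≥0∞), mul_div_assoc, mul_assoc, hone, mul_one]
    have hmω : (2 : ℝ≥0∞) ^ (i + 1) ≤ (m : ℝ≥0∞) * ω := by
      have hqq : (2 * (β : ℝ≥0∞) * h / ε) * ω = 2 ^ (i + 1) := by
        calc (2 * (β : ℝ≥0∞) * h / ε) * ω = ((2 * (β : ℝ≥0∞) * h / ε) * q) * 2 ^ i := by
              rw [hω, ← mul_assoc]
          _ = 2 * 2 ^ i := by rw [h2q]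
          _ = 2 ^ (i + 1) := by rw [pow_succ]; ring
      calc (2 : ℝ≥0∞) ^ (i + 1) = (2 * (β : ℝ≥0∞) * h / ε) * ω := hqq.symm
        _ ≤ (m : ℝ≥0∞) * ω := mul_le_mul_left hm ω
    have hlow := hopDist_lower w ω (Fintype.card V) m u v
    rw [← hwieq] at hlow
    rcases min_le_iff.mp hlow with hc | hc
    · exact hc
    · calc hopDist w m u v ≤ hopDist w (β * h) u v := hopDist_anti w hml u v
        _ ≤ dEst := hlo
        _ ≤ 2 ^ (i + 1) := hsc2.le
        _ ≤ (m : ℝ≥0∞) * ω := hmω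
        _ ≤ ((m + 1 : ℕ) : ℝ≥0∞) * ω := mul_le_mul_left (Nat.cast_le.mpr (Nat.le_succ m)) ω
        _ ≤ hopDist wi (Fintype.card V) u v := hc
  · -- (c)
    intro c W s hsω hW
    have h2i0 : ((2 : ℝ≥0∞) ^ i) ≠ 0 := (pow_ne_zero i two_ne_zero)
    have h2it : ((2 : ℝ≥0∞) ^ i) ≠ ⊤ := (ENNReal.pow_ne_top ENNReal.ofNat_ne_top)
    have h1 : (s : ℝ≥0∞) * q * 2 ^ i ≤ c * 2 ^ i := by
      calc (s : ℝ≥0∞) * q * 2 ^ i = (s : ℝ≥0∞) * ω := by rw [hω, ← mul_assoc]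
        _ ≤ W := hsω
        _ ≤ c * 2 ^ i := hW
    have h2 : (s : ℝ≥0∞) * q ≤ c := (ENNReal.mul_le_mul_iff_left h2i0 h2it).mp h1
    have h3 : (s : ℝ≥0∞) * ε ≤ c * ((β : ℝ≥0∞) * h) := by
      calc (s : ℝ≥0∞) * ε = (s : ℝ≥0∞) * q * ((β : ℝ≥0∞) * h) := by
            rw [hq, mul_assoc, ENNReal.div_mul_cancel hB0 hBt]
        _ ≤ c * ((β : ℝ≥0∞) * h) := mul_le_mul_left h2 _
    rw [mul_assoc, ENNReal.le_div_iff_mul_le (Or.inl hε0') (Or.inl hεt)]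
    exact h3
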